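/- Let Z, W, A, U be discrete random variables on a common probability space with all relevant conditioning events of positive probability. If W is conditionally independent of (A, Z) given U, then E[ 1/P(A = a | U) | W, A = a ] = 1/P(A = a | W). -/
import Mathlib

noncomputable section

/-- Probability of an event under a pmf `p` on a finite outcome space. -/
def Pr {Ω : Type*} [Fintype Ω] (p : Ω → ℝ) (E : Set Ω) : ℝ :=
  ∑ ω : Ω, E.indicator p ω

/-- Conditional probability `P(E | F)`. -/
def condPr {Ω : Type*} [Fintype Ω] (p : Ω → ℝ) (E F : Set Ω) : ℝ :=
  Pr p (E ∩ F) / Pr p F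

/-- Conditional expectation `E[g | F]` of a real function `g` given an event `F`. -/
def condExp' {Ω : Type*} [Fintype Ω] (p : Ω → ℝ) (g : Ω → ℝ) (F : Set Ω) : ℝ :=
  (∑ ω : Ω, F.indicator (fun ω' => p ω' * g ω') ω) / Pr p F

lemma Pr_nonneg {Ω : Type*} [Fintype Ω] (p : Ω → ℝ) (hp0 : ∀ ω, 0 ≤ p ω) (E : Set Ω) :
    0 ≤ Pr p E :=
  Finset.sum_nonneg fun ω _ => Set.indicator_nonneg (fun ω _ => hp0 ω) ω

lemma Pr_mono {Ω : Type*} [Fintype Ω] (p : Ω → ℝ) (hp0 : ∀ ω, 0 ≤ p ω) {E F : Set Ω}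
    (h : E ⊆ F) : Pr p E ≤ Pr p F := by
  refine Finset.sum_le_sum fun ω _ => ?_
  classical
  by_cases hE : ω ∈ E
  · rw [Set.indicator_of_mem hE, Set.indicator_of_mem (h hE)]
  · rw [Set.indicator_of_notMem hE]
    exact Set.indicator_nonneg (fun ω _ => hp0 ω) ω

/-- Fiber decomposition of an indicator sum over the values of `V`. -/
lemma sum_indicator_fiber {Ω β : Type*} [Fintype Ω] [DecidableEq β]
    (f : Ω → ℝ) (Q : Ω → Prop) (V : Ω → β) :
    ∑ ω : Ω, {ω' | Q ω'}.indicator f ω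
      = ∑ v ∈ Finset.univ.image V, ∑ ω : Ω, {ω' | Q ω' ∧ V ω' = v}.indicator f ω := by
  rw [Finset.sum_comm]
  refine Finset.sum_congr rfl fun ω _ => ?_
  by_cases hQ : Q ω
  · rw [Set.indicator_of_mem (show ω ∈ {ω' | Q ω'} from hQ)]
    rw [Finset.sum_eq_single (V ω)]
    · exact (Set.indicator_of_mem (show ω ∈ {ω' | Q ω' ∧ V ω' = V ω} from ⟨hQ, rfl⟩) f).symm
    · intro b _ hb
      exact Set.indicator_of_notMem (fun h => hb h.2.symm) f
    · intro h
      exact absurd (Finset.mem_image_of_mem V (Finset.mem_univ ω)) h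
  · rw [Set.indicator_of_notMem (show ω ∉ {ω' | Q ω'} from hQ)]
    refine (Finset.sum_eq_zero fun v _ => ?_).symm
    exact Set.indicator_of_notMem (fun h => hQ h.1) f

lemma Pr_fiber {Ω β : Type*} [Fintype Ω] [DecidableEq β] (p : Ω → ℝ) (Q : Ω → Prop) (V : Ω → β) :
    Pr p {ω | Q ω} = ∑ v ∈ Finset.univ.image V, Pr p {ω | Q ω ∧ V ω = v} :=
  sum_indicator_fiber p Q V

/-- If `W ⊥⊥ (A, Z) | U` (the proxy condition, stated via factorization of joint pmfs),
then `E[ 1 / P(A = a | U) | W = w, A = a ] = 1 / P(A = a | W = w)`. -/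
theorem inverse_propensity_bridge {Ω 𝓐 𝓦 𝓩 𝓤 : Type*} [Fintype Ω]
    (p : Ω → ℝ) (hp0 : ∀ ω, 0 ≤ p ω) (hp1 : ∑ ω : Ω, p ω = 1)
    (A : Ω → 𝓐) (W : Ω → 𝓦) (Z : Ω → 𝓩) (U : Ω → 𝓤) (a : 𝓐)
    (hCI : ∀ (w : 𝓦) (a' : 𝓐) (z : 𝓩) (u : 𝓤),
      Pr p {ω | W ω = w ∧ A ω = a' ∧ Z ω = z ∧ U ω = u} * Pr p {ω | U ω = u}
        = Pr p {ω | W ω = w ∧ U ω = u} * Pr p {ω | A ω = a' ∧ Z ω = z ∧ U ω = u})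
    (hposU : ∀ u : 𝓤, Pr p {ω | U ω = u} ≠ 0 →
      0 < condPr p {ω | A ω = a} {ω | U ω = u}) :
    ∀ w : 𝓦, 0 < Pr p {ω | W ω = w ∧ A ω = a} →
      condExp' p (fun ω => 1 / condPr p {ω' | A ω' = a} {ω' | U ω' = U ω})
          {ω | W ω = w ∧ A ω = a}
        = 1 / condPr p {ω | A ω = a} {ω | W ω = w} := by
  intro w hWA
  classical
  have hCI' : ∀ u : 𝓤,
      Pr p {ω | W ω = w ∧ A ω = a ∧ U ω = u} * Pr p {ω | U ω = u}
        = Pr p {ω | W ω = w ∧ U ω = u} * Pr p {ω | A ω = a ∧ U ω = u} := by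
    intro u
    have h1 : Pr p {ω | W ω = w ∧ A ω = a ∧ U ω = u}
        = ∑ z ∈ Finset.univ.image Z, Pr p {ω | W ω = w ∧ A ω = a ∧ Z ω = z ∧ U ω = u} := by
      rw [Pr_fiber p (fun ω => W ω = w ∧ A ω = a ∧ U ω = u) Z]
      refine Finset.sum_congr rfl fun z _ => ?_
      congr 1
      ext ω; simp only [Set.mem_setOf_eq]; tauto
    have h2 : Pr p {ω | A ω = a ∧ U ω = u}
        = ∑ z ∈ Finset.univ.image Z, Pr p {ω | A ω = a ∧ Z ω = z ∧ U ω = u} := by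
      rw [Pr_fiber p (fun ω => A ω = a ∧ U ω = u) Z]
      refine Finset.sum_congr rfl fun z _ => ?_
      congr 1
      ext ω; simp only [Set.mem_setOf_eq]; tauto
    rw [h1, h2, Finset.sum_mul, Finset.mul_sum]
    exact Finset.sum_congr rfl fun z _ => hCI w a z u
  have hnum : (∑ ω : Ω, ({ω | W ω = w ∧ A ω = a}).indicator
        (fun ω' => p ω' * (1 / condPr p {ω'' | A ω'' = a} {ω'' | U ω'' = U ω'})) ω)
      = Pr p {ω | W ω = w} := by
    rw [sum_indicator_fiber _ (fun ω => W ω = w ∧ A ω = a) U]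
    rw [Pr_fiber p (fun ω => W ω = w) U]
    refine Finset.sum_congr rfl fun u _ => ?_
    have hsum : (∑ ω : Ω, ({ω' | (W ω' = w ∧ A ω' = a) ∧ U ω' = u}).indicator
          (fun ω' => p ω' * (1 / condPr p {ω'' | A ω'' = a} {ω'' | U ω'' = U ω'})) ω)
        = Pr p {ω' | (W ω' = w ∧ A ω' = a) ∧ U ω' = u}
            * (1 / condPr p {ω'' | A ω'' = a} {ω'' | U ω'' = u}) := by
      rw [Pr, Finset.sum_mul]
      refine Finset.sum_congr rfl fun ω _ => ?_
      by_cases hω : ω ∈ {ω' | (W ω' = w ∧ A ω' = a) ∧ U ω' = u}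
      · rw [Set.indicator_of_mem hω, Set.indicator_of_mem hω, hω.2]
      · rw [Set.indicator_of_notMem hω, Set.indicator_of_notMem hω, zero_mul]
    rw [hsum]
    have hAUset : {ω : Ω | A ω = a} ∩ {ω | U ω = u} = {ω | A ω = a ∧ U ω = u} := by
      ext ω; simp [Set.mem_setOf_eq]
    rw [condPr, hAUset]
    by_cases hu : Pr p {ω | U ω = u} = 0
    · have hWAU0 : Pr p {ω' | (W ω' = w ∧ A ω' = a) ∧ U ω' = u} = 0 := by
        have hle := Pr_mono p hp0 (E := {ω' | (W ω' = w ∧ A ω' = a) ∧ U ω' = u})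
          (F := {ω | U ω = u}) (fun ω hω => hω.2)
        have hge := Pr_nonneg p hp0 {ω' | (W ω' = w ∧ A ω' = a) ∧ U ω' = u}
        linarith
      have hWU0 : Pr p {ω' | W ω' = w ∧ U ω' = u} = 0 := by
        have hle := Pr_mono p hp0 (E := {ω' | W ω' = w ∧ U ω' = u})
          (F := {ω | U ω = u}) (fun ω hω => hω.2)
        have hge := Pr_nonneg p hp0 {ω' | W ω' = w ∧ U ω' = u}
        linarith
      rw [hWAU0, hWU0, zero_mul]
    · have hcpos := hposU u hu
      rw [condPr, hAUset] at hcpos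
      have hPAUne : Pr p {ω | A ω = a ∧ U ω = u} ≠ 0 := by
        intro h0
        rw [h0, zero_div] at hcpos
        exact lt_irrefl 0 hcpos
      have hkey := hCI' u
      have hset1 : {ω | W ω = w ∧ A ω = a ∧ U ω = u}
          = {ω' | (W ω' = w ∧ A ω' = a) ∧ U ω' = u} := by
        ext ω; simp only [Set.mem_setOf_eq]; tauto
      rw [hset1] at hkey
      rw [one_div_div]
      field_simp
      linarith [hkey]
  rw [condExp', hnum, condPr]
  have hWAset : {ω : Ω | A ω = a} ∩ {ω | W ω = w} = {ω | W ω = w ∧ A ω = a} := by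
    ext ω; simp only [Set.mem_setOf_eq, Set.mem_inter_iff]; tauto
  rw [hWAset, one_div_div]

end
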